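/- Let N, m be positive integers, M a real N×N positive-definite diagonal matrix, Q a real m×N matrix, D = QᵀQ, E > 0, and H = −[[0, M^{−1/2}Qᵀ],[Q M^{−1/2}, 0]]. Suppose ψ : ℝ → ℂ^(N+m) is differentiable, satisfies ψ'(t) = −i·H·ψ(t) for all t, and ψ(0) = (1/√(2E))·(M^{1/2}v₀, i·Q u₀) for some u₀, v₀ ∈ ℝ^N. Then the unique solution u : ℝ → ℝ^N of M·u''(t) = −D·u(t) with u(0) = u₀ and u'(0) = v₀ satisfies ψ(t) = (1/√(2E))·(M^{1/2}u'(t), i·Q u(t)) for all t. -/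

import Mathlib

open Matrix

/-- Lemma 1 (converse direction): if `ψ` solves the Schrödinger equation
`ψ' = -iHψ` with `ψ(0)` of the encoded form for data `(u₀, v₀)`, then the (unique) solution
`u` of `M u'' = -D u`, `u(0)=u₀`, `u'(0)=v₀` satisfies
`ψ(t) = (1/√(2E)) (M^{1/2} u'(t), i Q u(t))` for all `t`. -/
theorem schrodinger_to_lattice
    (N m : ℕ) (hN : 0 < N) (hm : 0 < m)
    (Mdiag : Fin N → ℝ) (hM : ∀ i, 0 < Mdiag i)
    (Q : Matrix (Fin m) (Fin N) ℝ)
    (E : ℝ) (hE : 0 < E)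
    (H : Matrix (Fin N ⊕ Fin m) (Fin N ⊕ Fin m) ℂ)
    (hH : H = -(Matrix.fromBlocks 0
      (((Matrix.diagonal fun i => (Real.sqrt (Mdiag i))⁻¹) * Qᵀ).map (fun x : ℝ => (x : ℂ)))
      ((Q * (Matrix.diagonal fun i => (Real.sqrt (Mdiag i))⁻¹)).map (fun x : ℝ => (x : ℂ)))
      0))
    (ψ : ℝ → (Fin N ⊕ Fin m) → ℂ)
    (hψdiff : ∀ t x, HasDerivAt (fun s => ψ s x) ((((-Complex.I) • (H *ᵥ ψ t))) x) t)
    (u₀ v₀ : Fin N → ℝ)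
    (hψ0 : ψ 0 = fun x =>
      (1 / (Real.sqrt (2 * E) : ℂ)) * (Sum.elim
        (fun i : Fin N => ((Real.sqrt (Mdiag i) * v₀ i : ℝ) : ℂ))
        (fun j : Fin m => Complex.I * (((Q *ᵥ u₀) j : ℝ) : ℂ)) x))
    (u u' u'' : ℝ → Fin N → ℝ)
    (hu : ∀ t i, HasDerivAt (fun s => u s i) (u' t i) t)
    (hu' : ∀ t i, HasDerivAt (fun s => u' s i) (u'' t i) t)
    (hode : ∀ t, (Matrix.diagonal Mdiag) *ᵥ (u'' t) = -((Qᵀ * Q) *ᵥ (u t)))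
    (hic0 : u 0 = u₀) (hic1 : u' 0 = v₀) :
    ∀ t, ψ t = fun x =>
      (1 / (Real.sqrt (2 * E) : ℂ)) * (Sum.elim
        (fun i : Fin N => ((Real.sqrt (Mdiag i) * u' t i : ℝ) : ℂ))
        (fun j : Fin m => Complex.I * (((Q *ᵥ (u t)) j : ℝ) : ℂ)) x) := by
  classical
  set c : ℂ := 1 / (Real.sqrt (2 * E) : ℂ) with hc
  set g : ℝ → (Fin N ⊕ Fin m) → ℂ := fun t x =>
    c * (Sum.elim (fun i : Fin N => ((Real.sqrt (Mdiag i) * u' t i : ℝ) : ℂ))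
      (fun j : Fin m => Complex.I * (((Q *ᵥ (u t)) j : ℝ) : ℂ)) x) with hgdef
  suffices hmain : ∀ t, ψ t = g t by
    intro t; exact hmain t
  -- the vector field is Lipschitz
  set L : ((Fin N ⊕ Fin m) → ℂ) →L[ℂ] ((Fin N ⊕ Fin m) → ℂ) :=
    (-Complex.I) • (LinearMap.toContinuousLinearMap (Matrix.mulVecLin H)) with hLdef
  have hL : ∀ x, L x = (-Complex.I) • (H *ᵥ x) := fun x => rfl
  have hLfun : ⇑L = fun x : (Fin N ⊕ Fin m) → ℂ => (-Complex.I) • (H *ᵥ x) := funext hL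
  have hlip : ∀ t : ℝ, LipschitzWith ‖L‖₊
      (fun x : (Fin N ⊕ Fin m) → ℂ => (-Complex.I) • (H *ᵥ x)) := by
    intro t
    have h := L.lipschitz
    rwa [hLfun] at h
  have hMsqrt : ∀ i, Real.sqrt (Mdiag i) ≠ 0 := fun i =>
    ne_of_gt (Real.sqrt_pos.mpr (hM i))
  have hMsq : ∀ i, Real.sqrt (Mdiag i) * Real.sqrt (Mdiag i) = Mdiag i := fun i =>
    Real.mul_self_sqrt (hM i).le
  -- g solves the same ODE
  have hgderiv : ∀ t, HasDerivAt g ((-Complex.I) • (H *ᵥ g t)) t := by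
    intro t
    rw [hasDerivAt_pi]
    intro x
    have hval : ((-Complex.I) • (H *ᵥ g t)) x =
        c * (Sum.elim (fun i : Fin N => ((Real.sqrt (Mdiag i) * u'' t i : ℝ) : ℂ))
          (fun j : Fin m => Complex.I * (((Q *ᵥ (u' t)) j : ℝ) : ℂ)) x) := by
      cases x with
      | inl i =>
        have h1 : ((Qᵀ * Q) *ᵥ (u t)) i = -(Mdiag i * u'' t i) := by
          have h := congrFun (hode t) i
          rw [Matrix.mulVec_diagonal] at h
          simp only [Pi.neg_apply] at h
          linarith
        have hA : ∀ z : (Fin N ⊕ Fin m) → ℂ,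
            ((-Complex.I) • (H *ᵥ z)) (Sum.inl i) =
              Complex.I * ∑ j : Fin m,
                (((Real.sqrt (Mdiag i))⁻¹ * Q j i : ℝ) : ℂ) * z (Sum.inr j) := by
          intro z
          rw [hH]
          simp only [Pi.smul_apply, smul_eq_mul, Matrix.mulVec, dotProduct,
            Fintype.sum_sum_type, Matrix.neg_apply, Matrix.fromBlocks_apply₁₁,
            Matrix.fromBlocks_apply₁₂, Matrix.zero_apply, Matrix.map_apply,
            Matrix.diagonal_mul, Matrix.transpose_apply, zero_mul, neg_zero,
            Finset.sum_const_zero, zero_add, neg_mul]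
          rw [Finset.sum_neg_distrib]
          ring
        rw [hA (g t)]
        simp only [hgdef, Sum.elim_inr, Sum.elim_inl]
        have hterm : ∀ j : Fin m,
            (((Real.sqrt (Mdiag i))⁻¹ * Q j i : ℝ) : ℂ) *
              (c * (Complex.I * (((Q *ᵥ u t) j : ℝ) : ℂ))) =
            (c * Complex.I) * ((((Real.sqrt (Mdiag i))⁻¹ * (Q j i * (Q *ᵥ u t) j) : ℝ)) : ℂ) := by
          intro j; push_cast; ring
        rw [Finset.sum_congr rfl fun j _ => hterm j, ← Finset.mul_sum, ← Complex.ofReal_sum]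
        have h2 : (∑ j, Q j i * (Q *ᵥ u t) j) = ((Qᵀ * Q) *ᵥ (u t)) i := by
          rw [← Matrix.mulVec_mulVec]
          simp [Matrix.mulVec, dotProduct, Matrix.transpose_apply]
        have h2' : (∑ j, (Real.sqrt (Mdiag i))⁻¹ * (Q j i * (Q *ᵥ u t) j))
            = (Real.sqrt (Mdiag i))⁻¹ * -(Mdiag i * u'' t i) := by
          rw [← Finset.mul_sum, h2, h1]
        rw [h2']
        have h3 : (Real.sqrt (Mdiag i))⁻¹ * (Mdiag i * u'' t i)
            = Real.sqrt (Mdiag i) * u'' t i := by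
          rw [show Mdiag i * u'' t i = Real.sqrt (Mdiag i) * (Real.sqrt (Mdiag i) * u'' t i) by
            rw [← mul_assoc, hMsq i], inv_mul_cancel_left₀ (hMsqrt i)]
        calc Complex.I * (c * Complex.I *
              (((Real.sqrt (Mdiag i))⁻¹ * -(Mdiag i * u'' t i) : ℝ) : ℂ))
            = (Complex.I * Complex.I) *
              (-(c * ((((Real.sqrt (Mdiag i))⁻¹ * (Mdiag i * u'' t i) : ℝ)) : ℂ))) := by
              push_cast; ring
          _ = c * ((((Real.sqrt (Mdiag i))⁻¹ * (Mdiag i * u'' t i) : ℝ)) : ℂ) := by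
              rw [Complex.I_mul_I]; ring
          _ = c * ((Real.sqrt (Mdiag i) * u'' t i : ℝ) : ℂ) := by rw [h3]
      | inr j =>
        have hB : ∀ z : (Fin N ⊕ Fin m) → ℂ,
            ((-Complex.I) • (H *ᵥ z)) (Sum.inr j) =
              Complex.I * ∑ i : Fin N,
                ((Q j i * (Real.sqrt (Mdiag i))⁻¹ : ℝ) : ℂ) * z (Sum.inl i) := by
          intro z
          rw [hH]
          simp only [Pi.smul_apply, smul_eq_mul, Matrix.mulVec, dotProduct,
            Fintype.sum_sum_type, Matrix.neg_apply, Matrix.fromBlocks_apply₂₁,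
            Matrix.fromBlocks_apply₂₂, Matrix.zero_apply, Matrix.map_apply,
            Matrix.mul_diagonal, zero_mul, neg_zero,
            Finset.sum_const_zero, add_zero, neg_mul]
          rw [Finset.sum_neg_distrib]
          ring
        rw [hB (g t)]
        simp only [hgdef, Sum.elim_inr, Sum.elim_inl]
        have hterm : ∀ i : Fin N,
            ((Q j i * (Real.sqrt (Mdiag i))⁻¹ : ℝ) : ℂ) *
              (c * ((Real.sqrt (Mdiag i) * u' t i : ℝ) : ℂ)) =
            c * ((Q j i * u' t i : ℝ) : ℂ) := by
          intro i
          have h4 : Q j i * (Real.sqrt (Mdiag i))⁻¹ * (Real.sqrt (Mdiag i) * u' t i)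
              = Q j i * u' t i := by
            rw [mul_assoc, inv_mul_cancel_left₀ (hMsqrt i)]
          calc ((Q j i * (Real.sqrt (Mdiag i))⁻¹ : ℝ) : ℂ) *
                (c * ((Real.sqrt (Mdiag i) * u' t i : ℝ) : ℂ))
              = c * ((Q j i * (Real.sqrt (Mdiag i))⁻¹ *
                  (Real.sqrt (Mdiag i) * u' t i) : ℝ) : ℂ) := by push_cast; ring
            _ = c * ((Q j i * u' t i : ℝ) : ℂ) := by rw [h4]
        rw [Finset.sum_congr rfl fun i _ => hterm i, ← Finset.mul_sum, ← Complex.ofReal_sum]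
        have h2 : (∑ i, Q j i * u' t i) = (Q *ᵥ (u' t)) j := by
          simp [Matrix.mulVec, dotProduct]
        rw [h2]
        ring
    rw [hval]
    cases x with
    | inl i =>
      have h := (((hu' t i).const_mul (Real.sqrt (Mdiag i))).ofReal_comp).const_mul c
      simpa [hgdef] using h
    | inr j =>
      have hd : HasDerivAt (fun s => (Q *ᵥ (u s)) j) ((Q *ᵥ (u' t)) j) t := by
        simp only [Matrix.mulVec, dotProduct]
        exact HasDerivAt.fun_sum fun i _ => (hu t i).const_mul (Q j i)
      have h := ((hd.ofReal_comp).const_mul Complex.I).const_mul c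
      simpa [hgdef] using h
  have hpsideriv : ∀ t, HasDerivAt ψ ((-Complex.I) • (H *ᵥ ψ t)) t := fun t =>
    hasDerivAt_pi.mpr (fun x => hψdiff t x)
  have h0 : ψ 0 = g 0 := by
    rw [hψ0]
    funext x
    simp [hgdef, hic0, hic1]
  intro t
  have hcontψ : Continuous ψ :=
    continuous_iff_continuousAt.mpr fun s => (hpsideriv s).continuousAt
  have hcontg : Continuous g :=
    continuous_iff_continuousAt.mpr fun s => (hgderiv s).continuousAt
  have hmem : (0 : ℝ) ∈ Set.Ioo (-(|t| + 1)) (|t| + 1) := by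
    constructor
    · nlinarith [abs_nonneg t]
    · nlinarith [abs_nonneg t]
  have key := ODE_solution_unique_of_mem_Icc
    (v := fun _ (x : (Fin N ⊕ Fin m) → ℂ) => (-Complex.I) • (H *ᵥ x))
    (s := fun _ => Set.univ) (K := ‖L‖₊)
    (fun s _ => (hlip s).lipschitzOnWith)
    hmem hcontψ.continuousOn (fun s _ => hpsideriv s) (fun _ _ => trivial)
    hcontg.continuousOn (fun s _ => hgderiv s) (fun _ _ => trivial) h0
  exact key ⟨by linarith [neg_abs_le t], by linarith [le_abs_self t]⟩
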